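/- Let n ≥ 1, let μ : 2^[n] → ℂ be a table with μ_∅ = 1, and let λ ∈ ℂⁿ. Define the transformed table μ' by μ'_I = ∑_{S ⊆ I} μ_S · ∏_{i ∈ I∖S} λ_i (this is the coefficient table of M(x)·∏_{i=1}^n (1 + λ_i x_i) modulo ⟨x₁²,…,x_n²⟩, i.e. the action of the unipotent group U(2)ⁿ). Let k and k' be the cumulants of μ and μ' respectively, computed via k_I = ∑_{π ∈ Π(I)} (−1)^{|π|−1}(|π|−1)! ∏_{B ∈ π} μ_B. Then k'_I = k_I for every I with |I| ≥ 2, and k'_{{i}} = k_{{i}} + λ_i for every i ∈ [n]. In other words, U(2)ⁿ acts on cumulant coordinates by translating the first-order cumulants and fixing all higher cumulants. -/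

import Mathlib

open Finset

/-- The cumulants of a table `μ` indexed by subsets of `[n]`. -/
noncomputable def cumulant {n : ℕ} (μ : Finset (Fin n) → ℂ) (I : Finset (Fin n)) : ℂ :=
  ∑ π : Finpartition I,
    (-1 : ℂ) ^ (π.parts.card - 1) * (Nat.factorial (π.parts.card - 1) : ℂ) *
      ∏ B ∈ π.parts, μ B

lemma parts_of_singleton {n : ℕ} (i : Fin n) (π : Finpartition ({i} : Finset (Fin n))) :
    π.parts = {{i}} := by
  apply Finset.eq_singleton_iff_nonempty_unique_mem.mpr
  refine ⟨π.parts_nonempty (by simp), fun B hB => ?_⟩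
  have h1 : B ⊆ {i} := π.le hB
  have h2 : B.Nonempty := π.nonempty_of_mem_parts hB
  exact (Finset.Nonempty.subset_singleton_iff h2).mp h1

lemma cumulant_singleton {n : ℕ} (μ : Finset (Fin n) → ℂ) (i : Fin n) :
    cumulant μ {i} = μ {i} := by
  haveI : Unique (Finpartition ({i} : Finset (Fin n))) :=
    (Finset.isAtom_singleton i).uniqueFinpartition
      (P := Finpartition.indiscrete (by simp))
  rw [cumulant]
  rw [show (∑ π : Finpartition ({i} : Finset (Fin n)),
    (-1 : ℂ) ^ (π.parts.card - 1) * (Nat.factorial (π.parts.card - 1) : ℂ) *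
      ∏ B ∈ π.parts, μ B) = ∑ _π : Finpartition ({i} : Finset (Fin n)), μ {i} from
    Finset.sum_congr rfl (fun π _ => by rw [parts_of_singleton i π]; simp)]
  rw [Finset.sum_const, Finset.card_univ, Fintype.card_unique, one_smul]

variable {n : ℕ}

lemma not_mem_part_of_erase {j : Fin n} {I : Finset (Fin n)} (σ : Finpartition (I.erase j))
    {C : Finset (Fin n)} (hC : C ∈ σ.parts) : j ∉ C :=
  fun h => (Finset.notMem_erase j I) (σ.le hC h)

/-- Add the singleton `{j}` as a new part. -/
def extendPart {j : Fin n} {I : Finset (Fin n)} (hj : j ∈ I) (σ : Finpartition (I.erase j)) :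
    Finpartition I :=
  σ.extend (b := {j}) (by simp)
    (Finset.disjoint_singleton_right.mpr (Finset.notMem_erase j I))
    (by rw [sup_eq_union, Finset.union_comm, ← Finset.insert_eq, Finset.insert_erase hj])

lemma extendPart_parts {j : Fin n} {I : Finset (Fin n)} (hj : j ∈ I)
    (σ : Finpartition (I.erase j)) : (extendPart hj σ).parts = insert {j} σ.parts := rfl

/-- Insert `j` into an existing part `B`. -/
def insertPart {j : Fin n} {I : Finset (Fin n)} (hj : j ∈ I) (σ : Finpartition (I.erase j))
    {B : Finset (Fin n)} (hB : B ∈ σ.parts) : Finpartition I where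
  parts := insert (insert j B) (σ.parts.erase B)
  supIndep := by
    rw [Finset.supIndep_iff_pairwiseDisjoint, coe_insert]
    refine Set.PairwiseDisjoint.insert
      (σ.disjoint.subset (Finset.coe_subset.mpr (Finset.erase_subset _ _)))
      (fun C hC hne => ?_)
    have hC' : C ∈ σ.parts := Finset.mem_of_mem_erase hC
    have hBC : B ≠ C := fun h => (Finset.mem_erase.mp hC).1 h.symm
    simp only [id_eq]
    rw [Finset.disjoint_insert_left]
    exact ⟨not_mem_part_of_erase σ hC', σ.disjoint hB hC' hBC⟩
  sup_parts := by
    have h1 : (insert B (σ.parts.erase B)).sup id = I.erase j := by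
      rw [Finset.insert_erase hB, σ.sup_parts]
    rw [Finset.sup_insert, id_eq, sup_eq_union] at h1
    rw [Finset.sup_insert, id_eq, sup_eq_union, Finset.insert_union, h1,
      Finset.insert_erase hj]
  bot_notMem := by
    intro h
    rcases Finset.mem_insert.mp h with h | h
    · exact (Finset.insert_ne_empty j B) h.symm
    · exact σ.bot_notMem (Finset.mem_of_mem_erase h)

lemma insertPart_parts {j : Fin n} {I : Finset (Fin n)} (hj : j ∈ I)
    (σ : Finpartition (I.erase j)) {B : Finset (Fin n)} (hB : B ∈ σ.parts) :
    (insertPart hj σ hB).parts = insert (insert j B) (σ.parts.erase B) := rfl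

section facts
variable {j : Fin n} {I : Finset (Fin n)} (hj : j ∈ I) (σ : Finpartition (I.erase j))

lemma singleton_not_mem_parts : ({j} : Finset (Fin n)) ∉ σ.parts :=
  fun h => not_mem_part_of_erase σ h (Finset.mem_singleton_self j)

lemma extendPart_card : (extendPart hj σ).parts.card = σ.parts.card + 1 := by
  rw [extendPart_parts, Finset.card_insert_of_notMem (singleton_not_mem_parts σ)]

lemma extendPart_part_j : (extendPart hj σ).part j = {j} := by
  apply Finpartition.part_eq_of_mem
  · rw [extendPart_parts]; exact Finset.mem_insert_self _ _
  · exact Finset.mem_singleton_self j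

lemma extendPart_erase_parts : (extendPart hj σ).parts.erase {j} = σ.parts := by
  rw [extendPart_parts, Finset.erase_insert (singleton_not_mem_parts σ)]

variable {B : Finset (Fin n)} (hB : B ∈ σ.parts)

lemma insertj_not_mem_erase : insert j B ∉ σ.parts.erase B := fun h =>
  not_mem_part_of_erase σ (Finset.mem_of_mem_erase h) (Finset.mem_insert_self j B)

lemma insertPart_card : (insertPart hj σ hB).parts.card = σ.parts.card := by
  rw [insertPart_parts, Finset.card_insert_of_notMem (insertj_not_mem_erase σ),
    Finset.card_erase_of_mem hB, Nat.sub_add_cancel]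
  exact Finset.card_pos.mpr ⟨B, hB⟩

lemma insertPart_part_j : (insertPart hj σ hB).part j = insert j B := by
  apply Finpartition.part_eq_of_mem
  · rw [insertPart_parts]; exact Finset.mem_insert_self _ _
  · exact Finset.mem_insert_self j B

lemma insertPart_erase_parts :
    (insertPart hj σ hB).parts.erase (insert j B) = σ.parts.erase B := by
  rw [insertPart_parts, Finset.erase_insert (insertj_not_mem_erase σ)]

end facts

lemma finpartition_eq_of_parts {α : Type*} [Lattice α] [OrderBot α] {a : α}
    {P Q : Finpartition a} (h : P.parts = Q.parts) : P = Q := by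
  cases P; cases Q; simpa using h

def phi {j : Fin n} {I : Finset (Fin n)} (hj : j ∈ I)
    (p : Σ σ : Finpartition (I.erase j), Option {B // B ∈ σ.parts}) : Finpartition I :=
  match p with
  | ⟨σ, none⟩ => extendPart hj σ
  | ⟨σ, some ⟨_, hB⟩⟩ => insertPart hj σ hB

lemma phi_injective {j : Fin n} {I : Finset (Fin n)} (hj : j ∈ I) :
    Function.Injective (phi hj) := by
  rintro ⟨σ₁, o₁⟩ ⟨σ₂, o₂⟩ h
  have hparts := congrArg Finpartition.parts h
  have hpartj := congrArg (fun π => Finpartition.part π j) h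
  match o₁, o₂ with
  | none, none =>
    replace h : extendPart hj σ₁ = extendPart hj σ₂ := h
    have hσ : σ₁ = σ₂ := by
      apply finpartition_eq_of_parts
      rw [← extendPart_erase_parts hj σ₁, ← extendPart_erase_parts hj σ₂, h]
    subst hσ; rfl
  | none, some ⟨B, hB⟩ =>
    exfalso
    rw [show phi hj ⟨σ₁, none⟩ = extendPart hj σ₁ from rfl,
      show phi hj ⟨σ₂, some ⟨B, hB⟩⟩ = insertPart hj σ₂ hB from rfl] at hpartj
    rw [extendPart_part_j, insertPart_part_j] at hpartj
    obtain ⟨x, hx⟩ := σ₂.nonempty_of_mem_parts hB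
    have hxj : x ≠ j := fun hxj => not_mem_part_of_erase σ₂ hB (hxj ▸ hx)
    have : x ∈ ({j} : Finset (Fin n)) := hpartj ▸ Finset.mem_insert_of_mem hx
    exact hxj (Finset.mem_singleton.mp this)
  | some ⟨B, hB⟩, none =>
    exfalso
    rw [show phi hj ⟨σ₁, some ⟨B, hB⟩⟩ = insertPart hj σ₁ hB from rfl,
      show phi hj ⟨σ₂, none⟩ = extendPart hj σ₂ from rfl] at hpartj
    rw [extendPart_part_j, insertPart_part_j] at hpartj
    obtain ⟨x, hx⟩ := σ₁.nonempty_of_mem_parts hB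
    have hxj : x ≠ j := fun hxj => not_mem_part_of_erase σ₁ hB (hxj ▸ hx)
    have : x ∈ ({j} : Finset (Fin n)) := hpartj ▸ Finset.mem_insert_of_mem hx
    exact hxj (Finset.mem_singleton.mp this)
  | some ⟨B₁, hB₁⟩, some ⟨B₂, hB₂⟩ =>
    rw [show phi hj ⟨σ₁, some ⟨B₁, hB₁⟩⟩ = insertPart hj σ₁ hB₁ from rfl,
      show phi hj ⟨σ₂, some ⟨B₂, hB₂⟩⟩ = insertPart hj σ₂ hB₂ from rfl] at hpartj h
    rw [insertPart_part_j, insertPart_part_j] at hpartj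
    have hBeq : B₁ = B₂ := by
      rw [← Finset.erase_insert (not_mem_part_of_erase σ₁ hB₁),
        ← Finset.erase_insert (a := j) (s := B₂) (not_mem_part_of_erase σ₂ hB₂), hpartj]
    subst hBeq
    have hσ : σ₁ = σ₂ := by
      apply finpartition_eq_of_parts
      have he : σ₁.parts.erase B₁ = σ₂.parts.erase B₁ := by
        rw [← insertPart_erase_parts hj σ₁ hB₁, ← insertPart_erase_parts hj σ₂ hB₂, h]
      rw [← Finset.insert_erase hB₁, ← Finset.insert_erase hB₂, he]
    subst hσ; rfl

lemma phi_surjective {j : Fin n} {I : Finset (Fin n)} (hj : j ∈ I) :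
    Function.Surjective (phi hj) := by
  intro π
  have hBj := π.part_mem.2 hj
  have hjB := π.mem_part hj
  by_cases hcase : π.part j = {j}
  · -- σ := parts.erase {j}
    refine ⟨⟨⟨π.parts.erase {j}, ?_, ?_, ?_⟩, none⟩, ?_⟩
    · exact π.supIndep.subset (Finset.erase_subset _ _)
    · ext x
      rw [Finset.mem_sup]
      constructor
      · rintro ⟨C, hC, hxC⟩
        have hC' : C ∈ π.parts := Finset.mem_of_mem_erase hC
        rw [Finset.mem_erase]
        refine ⟨fun hxj => ?_, π.le hC' hxC⟩
        subst hxj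
        exact (Finset.mem_erase.mp hC).1 ((π.part_eq_of_mem hC' hxC) ▸ hcase)
      · intro hx
        obtain ⟨hxj, hxI⟩ := Finset.mem_erase.mp hx
        refine ⟨π.part x, Finset.mem_erase.mpr ⟨fun h => ?_, π.part_mem.2 hxI⟩, π.mem_part hxI⟩
        exact hxj (Finset.mem_singleton.mp (h ▸ π.mem_part hxI))
    · exact fun h => π.bot_notMem (Finset.mem_of_mem_erase h)
    · apply finpartition_eq_of_parts
      show insert {j} (π.parts.erase {j}) = π.parts
      rw [Finset.insert_erase (hcase ▸ hBj)]
  · -- σ := insert ((π.part j).erase j) (parts.erase (part j))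
    set Bj := π.part j with hBjdef
    set B := Bj.erase j with hBdef
    have hBne : B.Nonempty := by
      rw [Finset.nonempty_iff_ne_empty]
      intro h
      rcases (Finset.erase_eq_empty_iff Bj j).mp h with h' | h'
      · exact Finset.nonempty_iff_ne_empty.mp (π.nonempty_of_mem_parts hBj) h'
      · exact hcase h'
    have hBsub : B ⊆ I.erase j := fun x hx => by
      rw [Finset.mem_erase]
      exact ⟨(Finset.mem_erase.mp hx).1, π.le hBj (Finset.mem_of_mem_erase hx)⟩
    have hBnotmem : B ∉ π.parts.erase Bj := by
      intro h
      obtain ⟨x, hx⟩ := hBne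
      have hd := π.disjoint (Finset.mem_of_mem_erase h) hBj (Finset.mem_erase.mp h).1
      exact Finset.disjoint_left.mp hd hx (Finset.mem_of_mem_erase hx)
    refine ⟨⟨⟨insert B (π.parts.erase Bj), ?_, ?_, ?_⟩, some ⟨B, Finset.mem_insert_self _ _⟩⟩, ?_⟩
    · rw [Finset.supIndep_iff_pairwiseDisjoint, coe_insert]
      refine Set.PairwiseDisjoint.insert
        (π.disjoint.subset (Finset.coe_subset.mpr (Finset.erase_subset _ _)))
        (fun C hC hne => ?_)
      have hC' : C ∈ π.parts := Finset.mem_of_mem_erase hC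
      have hne' : Bj ≠ C := fun h => (Finset.mem_erase.mp hC).1 h.symm
      exact (π.disjoint hBj hC' hne').mono_left (Finset.erase_subset _ _)
    · rw [Finset.sup_insert, id_eq, sup_eq_union]
      ext x
      rw [Finset.mem_union, Finset.mem_sup]
      constructor
      · rintro (hx | ⟨C, hC, hxC⟩)
        · exact hBsub hx
        · have hC' : C ∈ π.parts := Finset.mem_of_mem_erase hC
          rw [Finset.mem_erase]
          refine ⟨fun hxj => ?_, π.le hC' hxC⟩
          subst hxj
          exact (Finset.mem_erase.mp hC).1 (π.part_eq_of_mem hC' hxC).symm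
      · intro hx
        obtain ⟨hxj, hxI⟩ := Finset.mem_erase.mp hx
        by_cases hx' : π.part x = Bj
        · exact Or.inl (Finset.mem_erase.mpr ⟨hxj, hx' ▸ π.mem_part hxI⟩)
        · exact Or.inr ⟨π.part x, Finset.mem_erase.mpr ⟨hx', π.part_mem.2 hxI⟩, π.mem_part hxI⟩
    · intro h
      rcases Finset.mem_insert.mp h with h | h
      · exact Finset.nonempty_iff_ne_empty.mp hBne h.symm
      · exact π.bot_notMem (Finset.mem_of_mem_erase h)
    · apply finpartition_eq_of_parts
      show insert (insert j B) ((insert B (π.parts.erase Bj)).erase B) = π.parts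
      rw [Finset.erase_insert hBnotmem, Finset.insert_erase hjB, Finset.insert_erase hBj]

lemma sumE_eq_zero {j : Fin n} {I : Finset (Fin n)} (hj : j ∈ I) (hI : 2 ≤ I.card)
    (μ : Finset (Fin n) → ℂ) (hμ : μ ∅ = 1) :
    ∑ π : Finpartition I,
      (-1 : ℂ) ^ (π.parts.card - 1) * (Nat.factorial (π.parts.card - 1) : ℂ) *
        (μ ((π.part j).erase j) * ∏ B ∈ π.parts.erase (π.part j), μ B) = 0 := by
  have hbij : Function.Bijective (phi hj) := ⟨phi_injective hj, phi_surjective hj⟩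
  rw [← Function.Bijective.sum_comp hbij fun π =>
    (-1 : ℂ) ^ (π.parts.card - 1) * (Nat.factorial (π.parts.card - 1) : ℂ) *
      (μ ((π.part j).erase j) * ∏ B ∈ π.parts.erase (π.part j), μ B)]
  rw [← Finset.univ_sigma_univ, Finset.sum_sigma]
  apply Finset.sum_eq_zero
  intro σ _
  have hne : (I.erase j).Nonempty := by
    rw [← Finset.card_pos, Finset.card_erase_of_mem hj]; omega
  obtain ⟨k, hk⟩ : ∃ k, σ.parts.card = k + 1 := by
    have := Finset.card_pos.mpr (σ.parts_nonempty (Finset.nonempty_iff_ne_empty.mp hne))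
    exact ⟨σ.parts.card - 1, by omega⟩
  rw [Fintype.sum_option]
  have Tnone : (-1 : ℂ) ^ ((phi hj ⟨σ, none⟩).parts.card - 1) *
      (Nat.factorial ((phi hj ⟨σ, none⟩).parts.card - 1) : ℂ) *
      (μ (((phi hj ⟨σ, none⟩).part j).erase j) *
        ∏ B ∈ (phi hj ⟨σ, none⟩).parts.erase ((phi hj ⟨σ, none⟩).part j), μ B) =
      (-1 : ℂ) ^ (k + 1) * (Nat.factorial (k + 1) : ℂ) * ∏ B ∈ σ.parts, μ B := by
    have hphi : phi hj ⟨σ, none⟩ = extendPart hj σ := rfl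
    rw [hphi, extendPart_card, extendPart_part_j, extendPart_erase_parts,
      Finset.erase_singleton, hμ, one_mul, hk, Nat.add_sub_cancel]
  have Tsome : ∀ b : {B // B ∈ σ.parts},
      (-1 : ℂ) ^ ((phi hj ⟨σ, some b⟩).parts.card - 1) *
      (Nat.factorial ((phi hj ⟨σ, some b⟩).parts.card - 1) : ℂ) *
      (μ (((phi hj ⟨σ, some b⟩).part j).erase j) *
        ∏ B ∈ (phi hj ⟨σ, some b⟩).parts.erase ((phi hj ⟨σ, some b⟩).part j), μ B) =
      (-1 : ℂ) ^ k * (Nat.factorial k : ℂ) * ∏ B ∈ σ.parts, μ B := by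
    rintro ⟨B, hB⟩
    have hphi : phi hj ⟨σ, some ⟨B, hB⟩⟩ = insertPart hj σ hB := rfl
    rw [hphi, insertPart_card, insertPart_part_j, insertPart_erase_parts,
      Finset.erase_insert (not_mem_part_of_erase σ hB), hk, Nat.add_sub_cancel,
      Finset.mul_prod_erase σ.parts μ hB]
  rw [Tnone, Finset.sum_congr rfl (fun b _ => Tsome b), Finset.sum_const,
    Finset.card_univ, Fintype.card_coe, hk, nsmul_eq_mul]
  push_cast [Nat.factorial_succ, pow_succ]
  ring

/-- Single-coordinate unipotent shift preserves higher cumulants. -/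
lemma cumulant_shift {j : Fin n} (c : ℂ) (μ : Finset (Fin n) → ℂ) (hμ : μ ∅ = 1)
    {I : Finset (Fin n)} (hI : 2 ≤ I.card) :
    cumulant (fun S => μ S + if j ∈ S then c * μ (S.erase j) else 0) I = cumulant μ I := by
  by_cases hj : j ∈ I
  case neg =>
    unfold cumulant
    refine Finset.sum_congr rfl fun π _ => ?_
    congr 1
    refine Finset.prod_congr rfl fun B hB => ?_
    have : j ∉ B := fun h => hj (π.le hB h)
    simp [this]
  case pos =>
    have hsplit : ∀ π : Finpartition I,
        (∏ B ∈ π.parts, (μ B + if j ∈ B then c * μ (B.erase j) else 0)) =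
        (∏ B ∈ π.parts, μ B) +
          c * (μ ((π.part j).erase j) * ∏ B ∈ π.parts.erase (π.part j), μ B) := by
      intro π
      have hmem := π.part_mem.2 hj
      have hjmem := π.mem_part hj
      have h1 : ∀ B ∈ π.parts.erase (π.part j),
          (μ B + if j ∈ B then c * μ (B.erase j) else 0) = μ B := by
        intro B hB
        have hjB : j ∉ B := fun h =>
          (Finset.mem_erase.mp hB).1 (π.part_eq_of_mem (Finset.mem_of_mem_erase hB) h).symm
        simp [hjB]
      rw [← Finset.mul_prod_erase π.parts _ hmem, if_pos hjmem,
        Finset.prod_congr rfl h1, add_mul, ← Finset.mul_prod_erase π.parts μ hmem, mul_assoc]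
    unfold cumulant
    calc ∑ π : Finpartition I,
          (-1 : ℂ) ^ (π.parts.card - 1) * (Nat.factorial (π.parts.card - 1) : ℂ) *
            ∏ B ∈ π.parts, (μ B + if j ∈ B then c * μ (B.erase j) else 0)
        = ∑ π : Finpartition I,
          ((-1 : ℂ) ^ (π.parts.card - 1) * (Nat.factorial (π.parts.card - 1) : ℂ) *
            (∏ B ∈ π.parts, μ B) +
          c * ((-1 : ℂ) ^ (π.parts.card - 1) * (Nat.factorial (π.parts.card - 1) : ℂ) *
            (μ ((π.part j).erase j) * ∏ B ∈ π.parts.erase (π.part j), μ B))) := by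
          refine Finset.sum_congr rfl fun π _ => ?_
          rw [hsplit π, mul_add, mul_left_comm]
      _ = ∑ π : Finpartition I,
          (-1 : ℂ) ^ (π.parts.card - 1) * (Nat.factorial (π.parts.card - 1) : ℂ) *
            ∏ B ∈ π.parts, μ B := by
          rw [Finset.sum_add_distrib, ← Finset.mul_sum, sumE_eq_zero hj hI μ hμ,
            mul_zero, add_zero]

lemma cumulant_shift_singleton {j : Fin n} (c : ℂ) (μ : Finset (Fin n) → ℂ) (hμ : μ ∅ = 1)
    (i : Fin n) :
    cumulant (fun S => μ S + if j ∈ S then c * μ (S.erase j) else 0) {i} =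
      cumulant μ {i} + (if i = j then c else 0) := by
  rw [cumulant_singleton, cumulant_singleton]
  by_cases h : i = j
  · subst h; simp [hμ]
  · have : j ∉ ({i} : Finset (Fin n)) := by simp [Ne.symm h]
    simp [this, h]

noncomputable def Ftab (μ : Finset (Fin n) → ℂ) (lam : Fin n → ℂ) (T I : Finset (Fin n)) : ℂ :=
  ∑ S ∈ I.powerset, if I \ S ⊆ T then μ S * ∏ i ∈ I \ S, lam i else 0

lemma Ftab_empty_right (μ : Finset (Fin n) → ℂ) (lam : Fin n → ℂ) (T : Finset (Fin n)) :
    Ftab μ lam T ∅ = μ ∅ := by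
  simp [Ftab]

lemma Ftab_empty_left (μ : Finset (Fin n) → ℂ) (lam : Fin n → ℂ) (I : Finset (Fin n)) :
    Ftab μ lam ∅ I = μ I := by
  rw [Ftab, Finset.sum_eq_single I]
  · simp
  · intro S hS hne
    rw [if_neg]
    intro h
    rw [Finset.subset_empty, Finset.sdiff_eq_empty_iff_subset] at h
    exact hne (Finset.Subset.antisymm (Finset.mem_powerset.mp hS) h)
  · intro h
    exact absurd (Finset.mem_powerset_self I) h

lemma Ftab_insert_of_not_mem {j : Fin n} {I : Finset (Fin n)} (hjI : j ∉ I)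
    (μ : Finset (Fin n) → ℂ) (lam : Fin n → ℂ) (T : Finset (Fin n)) :
    Ftab μ lam (insert j T) I = Ftab μ lam T I := by
  refine Finset.sum_congr rfl fun S _ => ?_
  have : j ∉ I \ S := fun h => hjI (Finset.mem_sdiff.mp h).1
  simp only [Finset.subset_insert_iff_of_notMem this]

lemma Ftab_insert_mem {j : Fin n} {T : Finset (Fin n)} (hjT : j ∉ T) {J : Finset (Fin n)}
    (hjJ : j ∉ J) (μ : Finset (Fin n) → ℂ) (lam : Fin n → ℂ) :
    Ftab μ lam (insert j T) (insert j J) =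
      Ftab μ lam T (insert j J) + lam j * Ftab μ lam T J := by
  have hdS : ∀ S ∈ J.powerset, insert j J \ S = insert j (J \ S) := by
    intro S hS
    have hjS : j ∉ S := fun h => hjJ (Finset.mem_powerset.mp hS h)
    ext x
    simp only [Finset.mem_sdiff, Finset.mem_insert]
    constructor
    · rintro ⟨h1 | h1, h2⟩
      · exact Or.inl h1
      · exact Or.inr ⟨h1, h2⟩
    · rintro (h1 | ⟨h1, h2⟩)
      · exact ⟨Or.inl h1, h1 ▸ hjS⟩
      · exact ⟨Or.inr h1, h2⟩
  have hdS2 : ∀ S ∈ J.powerset, insert j J \ insert j S = J \ S := by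
    intro S hS
    ext x
    simp only [Finset.mem_sdiff, Finset.mem_insert, not_or]
    constructor
    · rintro ⟨h1 | h1, h2, h3⟩
      · exact absurd h1 h2
      · exact ⟨h1, h3⟩
    · rintro ⟨h1, h2⟩
      exact ⟨Or.inr h1, fun h => hjJ (h ▸ h1), h2⟩
  have hnm : ∀ S ∈ J.powerset, j ∉ J \ S := fun S _ h => hjJ (Finset.mem_sdiff.mp h).1
  rw [Ftab, Ftab, Ftab, Finset.sum_powerset_insert hjJ, Finset.sum_powerset_insert hjJ]
  have e1 : ∀ S ∈ J.powerset,
      (if insert j J \ S ⊆ insert j T then μ S * ∏ i ∈ insert j J \ S, lam i else 0) =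
      lam j * (if J \ S ⊆ T then μ S * ∏ i ∈ J \ S, lam i else 0) := by
    intro S hS
    rw [hdS S hS]
    simp only [Finset.subset_insert_iff, Finset.erase_insert (hnm S hS),
      Finset.prod_insert (hnm S hS), mul_ite, mul_zero]
    congr 1
    ring
  have e2 : ∀ S ∈ J.powerset,
      (if insert j J \ insert j S ⊆ insert j T then
        μ (insert j S) * ∏ i ∈ insert j J \ insert j S, lam i else 0) =
      (if J \ S ⊆ T then μ (insert j S) * ∏ i ∈ J \ S, lam i else 0) := by
    intro S hS
    rw [hdS2 S hS]
    simp only [Finset.subset_insert_iff_of_notMem (hnm S hS)]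
  have e3 : ∀ S ∈ J.powerset,
      (if insert j J \ S ⊆ T then μ S * ∏ i ∈ insert j J \ S, lam i else 0) = 0 := by
    intro S hS
    rw [hdS S hS, if_neg]
    intro h
    exact hjT (h (Finset.mem_insert_self _ _))
  have e4 : ∀ S ∈ J.powerset,
      (if insert j J \ insert j S ⊆ T then
        μ (insert j S) * ∏ i ∈ insert j J \ insert j S, lam i else 0) =
      (if J \ S ⊆ T then μ (insert j S) * ∏ i ∈ J \ S, lam i else 0) := by
    intro S hS
    rw [hdS2 S hS]
  rw [Finset.sum_congr rfl e1, Finset.sum_congr rfl e2, Finset.sum_congr rfl e3,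
    Finset.sum_congr rfl e4, ← Finset.mul_sum, Finset.sum_const_zero]
  ring

lemma Ftab_cumulant (μ : Finset (Fin n) → ℂ) (hμ : μ ∅ = 1) (lam : Fin n → ℂ)
    (T : Finset (Fin n)) :
    Ftab μ lam T ∅ = 1 ∧
    (∀ I, 2 ≤ I.card → cumulant (Ftab μ lam T) I = cumulant μ I) ∧
    (∀ i, cumulant (Ftab μ lam T) {i} = cumulant μ {i} + if i ∈ T then lam i else 0) := by
  induction T using Finset.induction_on with
  | empty =>
    have h : Ftab μ lam ∅ = μ := funext (Ftab_empty_left μ lam)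
    rw [h]
    exact ⟨hμ, fun _ _ => rfl, fun i => by simp⟩
  | @insert j T hjT ih =>
    obtain ⟨ih0, ih2, ih1⟩ := ih
    have hfun : Ftab μ lam (insert j T) = fun S =>
        Ftab μ lam T S + if j ∈ S then lam j * Ftab μ lam T (S.erase j) else 0 := by
      funext I
      by_cases hjI : j ∈ I
      · have hIeq : I = insert j (I.erase j) := (Finset.insert_erase hjI).symm
        rw [if_pos hjI]
        calc Ftab μ lam (insert j T) I
            = Ftab μ lam (insert j T) (insert j (I.erase j)) := by rw [← hIeq]
          _ = Ftab μ lam T (insert j (I.erase j)) + lam j * Ftab μ lam T (I.erase j) :=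
              Ftab_insert_mem hjT (Finset.notMem_erase j I) μ lam
          _ = Ftab μ lam T I + lam j * Ftab μ lam T (I.erase j) := by rw [← hIeq]
      · rw [Ftab_insert_of_not_mem hjI, if_neg hjI, add_zero]
    refine ⟨?_, ?_, ?_⟩
    · rw [hfun]
      simp [ih0]
    · intro I hI
      rw [hfun, cumulant_shift (lam j) _ ih0 hI, ih2 I hI]
    · intro i
      rw [hfun, cumulant_shift_singleton (lam j) _ ih0 i, ih1 i, add_assoc]
      congr 1
      by_cases h : i = j
      · subst h
        simp [hjT]
      · simp [h, Finset.mem_insert]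


/-- the unipotent group `U(2)ⁿ` acts on moment tables by
`μ'_I = ∑_{S ⊆ I} μ_S ∏_{i ∈ I∖S} λ_i`; on cumulants it translates the first-order
cumulants by `λ` and fixes all higher cumulants. -/
theorem unipotent_action_on_cumulants {n : ℕ} (hn : 1 ≤ n)
    (μ : Finset (Fin n) → ℂ) (hμ : μ ∅ = 1) (lam : Fin n → ℂ)
    (μ' : Finset (Fin n) → ℂ)
    (hμ' : ∀ I : Finset (Fin n),
      μ' I = ∑ S ∈ I.powerset, μ S * ∏ i ∈ I \ S, lam i) :
    (∀ I : Finset (Fin n), 2 ≤ I.card → cumulant μ' I = cumulant μ I) ∧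
    (∀ i : Fin n, cumulant μ' {i} = cumulant μ {i} + lam i) := by
  have hμ'' : μ' = Ftab μ lam Finset.univ := by
    funext I
    rw [hμ', Ftab]
    exact Finset.sum_congr rfl fun S _ => (if_pos (Finset.subset_univ _)).symm
  obtain ⟨_, h2, h1⟩ := Ftab_cumulant μ hμ lam Finset.univ
  constructor
  · intro I hI
    rw [hμ'']
    exact h2 I hI
  · intro i
    rw [hμ'', h1 i, if_pos (Finset.mem_univ i)]
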